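/- For integers t ≥ 2, k ≥ 1, and nonnegative integers k_1,…,k_{r-1} with ∑_j k_j = k: the ratio multinomial(k; k_1,…,k_{r-1})^2 / multinomial(kt; k_1t,…,k_{r-1}t) is at most 1. -/

import Mathlib

lemma choose_mul_choose_le_aux (m n i j : ℕ) :
    m.choose i * n.choose j ≤ (m + n).choose (i + j) := by
  rw [Nat.add_choose_eq]
  have hmem : (i, j) ∈ Finset.HasAntidiagonal.antidiagonal (i + j) := by
    simp [Finset.HasAntidiagonal.mem_antidiagonal]
  exact Finset.single_le_sum (f := fun ij : ℕ × ℕ => m.choose ij.1 * n.choose ij.2)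
    (fun _ _ => Nat.zero_le _) hmem

lemma multinomial_mul_multinomial_le {α : Type*} (s : Finset α) (a b : α → ℕ) :
    Nat.multinomial s a * Nat.multinomial s b ≤
      Nat.multinomial s (fun x => a x + b x) := by
  induction s using Finset.cons_induction with
  | empty => simp
  | cons x s hx ih =>
    rw [Nat.multinomial_cons, Nat.multinomial_cons, Nat.multinomial_cons]
    calc (a x + ∑ i ∈ s, a i).choose (a x) * Nat.multinomial s a *
          ((b x + ∑ i ∈ s, b i).choose (b x) * Nat.multinomial s b)
        = (a x + ∑ i ∈ s, a i).choose (a x) * (b x + ∑ i ∈ s, b i).choose (b x) *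
          (Nat.multinomial s a * Nat.multinomial s b) := by ring
      _ ≤ ((a x + ∑ i ∈ s, a i) + (b x + ∑ i ∈ s, b i)).choose (a x + b x) *
          Nat.multinomial s (fun y => a y + b y) :=
          Nat.mul_le_mul (choose_mul_choose_le_aux _ _ _ _) ih
      _ = (a x + b x + ∑ i ∈ s, (a i + b i)).choose (a x + b x) *
          Nat.multinomial s (fun y => a y + b y) := by
          rw [Finset.sum_add_distrib]; ring_nf

lemma multinomial_sq_le {α : Type*} (s : Finset α) (kv : α → ℕ) (t : ℕ) (ht : 2 ≤ t) :
    Nat.multinomial s kv ^ 2 ≤ Nat.multinomial s (fun j => kv j * t) := by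
  induction t with
  | zero => omega
  | succ t ih =>
    rcases Nat.lt_or_ge t 2 with h2 | h2
    · interval_cases t
      · omega
      · calc Nat.multinomial s kv ^ 2 = Nat.multinomial s kv * Nat.multinomial s kv := sq _
          _ ≤ Nat.multinomial s (fun j => kv j + kv j) :=
              multinomial_mul_multinomial_le s kv kv
          _ = Nat.multinomial s (fun j => kv j * 2) := by
              apply Nat.multinomial_congr; intro j _; ring
    · calc Nat.multinomial s kv ^ 2
          ≤ Nat.multinomial s (fun j => kv j * t) := ih h2
        _ = Nat.multinomial s (fun j => kv j * t) * 1 := (mul_one _).symm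
        _ ≤ Nat.multinomial s (fun j => kv j * t) * Nat.multinomial s kv :=
            Nat.mul_le_mul_left _ (Nat.multinomial_pos _ _)
        _ ≤ Nat.multinomial s (fun j => kv j * t + kv j) :=
            multinomial_mul_multinomial_le s _ _
        _ = Nat.multinomial s (fun j => kv j * (t + 1)) := by
            apply Nat.multinomial_congr; intro j _; ring

/-- For `t ≥ 2`, `k ≥ 1` and nonnegative integers `k_1, …, k_{r-1}` with `∑_j k_j = k`,
`multinomial(k; k⃗)² / multinomial(kt; t·k⃗) ≤ 1`. -/
theorem multinomial_sq_ratio_le_one (r t k : ℕ) (hr : 2 ≤ r) (ht : 2 ≤ t) (hk : 1 ≤ k)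
    (kv : Fin (r - 1) → ℕ) (hkv : ∑ j, kv j = k) :
    (Nat.multinomial Finset.univ kv : ℝ) ^ 2 /
        (Nat.multinomial Finset.univ (fun j => kv j * t) : ℝ) ≤ 1 := by
  rw [div_le_one (by exact_mod_cast Nat.multinomial_pos _ _)]
  exact_mod_cast multinomial_sq_le Finset.univ kv t ht
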